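/- arXiv:1203.3368 — 3 statements merged into one kernel-verified Lean document; each statement's English description precedes it below -/
import Mathlib

section
/- With E as above (rows Cⱼ⊗Cⱼ for C with CCᵀ = I − J/m, CᵀC = I), the vector u₀ obtained by flattening the identity matrix I_{m−1} into a vector of length (m−1)² is an eigenvector of EᵀE with eigenvalue (m−1)/m. -/
open Matrix BigOperators

/-- With `E` the matrix whose rows are `Cⱼ ⊗ Cⱼ` (for `C` with `CCᵀ = I − J/m`, `CᵀC = I`),
the flattened identity matrix `u₀` is an eigenvector of `EᵀE` with eigenvalue `(m−1)/m`. -/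
theorem stmt_7 (m : ℕ) (C : Matrix (Fin m) (Fin (m - 1)) ℝ)
    (hCCt : C * Cᵀ = 1 - (1 / (m : ℝ)) • (Matrix.of fun _ _ => (1 : ℝ)))
    (hCtC : Cᵀ * C = 1)
    (E : Matrix (Fin m) (Fin (m - 1) × Fin (m - 1)) ℝ)
    (hE : ∀ j s t, E j (s, t) = C j s * C j t)
    (u₀ : Fin (m - 1) × Fin (m - 1) → ℝ)
    (hu₀ : ∀ s t, u₀ (s, t) = if s = t then 1 else 0) :
    (Eᵀ * E).mulVec u₀ = (((m : ℝ) - 1) / m) • u₀ := by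
  have h1 : ∀ j : Fin m, ∑ a, C j a * C j a = 1 - 1 / (m : ℝ) := by
    intro j
    have := congrFun (congrFun hCCt j) j
    simpa [Matrix.mul_apply, Matrix.one_apply, Matrix.sub_apply, Matrix.smul_apply] using this
  have h2 : ∀ s t, ∑ j, C j s * C j t = if s = t then (1 : ℝ) else 0 := by
    intro s t
    have := congrFun (congrFun hCtC s) t
    simpa [Matrix.mul_apply, Matrix.one_apply] using this
  funext p
  obtain ⟨s, t⟩ := p
  have key : ∀ j : Fin m, ∑ q : Fin (m - 1) × Fin (m - 1), E j q * u₀ q = 1 - 1 / (m : ℝ) := by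
    intro j
    rw [Fintype.sum_prod_type]
    have : ∀ a : Fin (m - 1), ∑ b, E j (a, b) * u₀ (a, b) = C j a * C j a := by
      intro a
      simp [hE, hu₀, mul_ite]
    simp only [this]
    exact h1 j
  simp only [Matrix.mulVec, dotProduct, Matrix.mul_apply, Matrix.transpose_apply,
    Pi.smul_apply, smul_eq_mul]
  calc ∑ q, (∑ j, E j (s, t) * E j q) * u₀ q
      = ∑ j, E j (s, t) * ∑ q, E j q * u₀ q := by
        simp only [Finset.sum_mul, Finset.mul_sum, mul_assoc]
        rw [Finset.sum_comm]
    _ = ∑ j, E j (s, t) * (1 - 1 / (m : ℝ)) := by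
        simp only [key]
    _ = (1 - 1 / (m : ℝ)) * ∑ j, C j s * C j t := by
        simp only [hE]
        rw [Finset.mul_sum]; simp [mul_comm]
    _ = ((m : ℝ) - 1) / m * u₀ (s, t) := by
        rw [h2, hu₀]
        by_cases h : s = t <;> simp [h, sub_div]
        · rcases Nat.eq_zero_or_pos m with hm | hm
          · exact absurd s.isLt (by simp [hm])
          · field_simp
end

section
/- Let g : S_m^n → ℝ^{(m−1)×(m−1)} have the form g(x) = B + Σᵢ Aⁱ·ρ¹(xᵢ) with E g = 0 (so B = 0), and suppose g(x)g(x)ᵀ = M for all x, where M ≠ 0 is a fixed matrix. Then at most one of the matrices A¹,…,Aⁿ is nonzero. (Because for i ≠ j, the degree-2 Fourier coefficient of g·gᵀ at the representation which is ρ¹ in coordinates i,j and trivial elsewhere must vanish, forcing AⁱₜₚAʲ_{wu} + AʲₜₚAⁱ_{wu} = 0 for all indices, which implies one of Aⁱ, Aʲ = 0.) -/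
set_option linter.unusedSectionVars false
set_option linter.unusedVariables false
set_option maxHeartbeats 1000000 in
example : True := trivial

open Matrix BigOperators

private lemma card_fixing {m : ℕ} (p : Fin m → Prop) [DecidablePred p] :
    Fintype.card {f : Equiv.Perm (Fin m) // ∀ a, ¬ p a → f a = a}
      = (Fintype.card {a : Fin m // p a}).factorial := by
  rw [Fintype.card_congr (Equiv.Perm.subtypeEquivSubtypePerm p).symm, Fintype.card_perm]

private lemma card_fix_one {m : ℕ} (i : Fin m) :
    Fintype.card {σ : Equiv.Perm (Fin m) // σ i = i} = (m - 1).factorial := by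
  have e : {σ : Equiv.Perm (Fin m) // σ i = i}
      ≃ {f : Equiv.Perm (Fin m) // ∀ a, ¬ ¬ (a = i) → f a = a} :=
    Equiv.subtypeEquivRight (fun f => by
      constructor
      · intro h a ha
        have : a = i := not_not.mp ha
        subst this; exact h
      · intro h
        exact h i (by simp))
  rw [Fintype.card_congr e, card_fixing]
  congr 1
  rw [Fintype.card_subtype_compl, Fintype.card_subtype_eq, Fintype.card_fin]

private lemma card_fix_two {m : ℕ} (i j : Fin m) (hij : i ≠ j) :
    Fintype.card {σ : Equiv.Perm (Fin m) // σ i = i ∧ σ j = j} = (m - 2).factorial := by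
  have e : {σ : Equiv.Perm (Fin m) // σ i = i ∧ σ j = j}
      ≃ {f : Equiv.Perm (Fin m) // ∀ a, ¬ ¬ (a = i ∨ a = j) → f a = a} :=
    Equiv.subtypeEquivRight (fun f => by
      constructor
      · rintro ⟨h1, h2⟩ a ha
        rcases not_not.mp ha with rfl | rfl
        · exact h1
        · exact h2
      · intro h
        exact ⟨h i (by simp), h j (by simp)⟩)
  rw [Fintype.card_congr e, card_fixing]
  congr 1
  rw [Fintype.card_subtype_compl]
  have h2 : Fintype.card {x : Fin m // x = i ∨ x = j} = 2 := by
    rw [Fintype.card_subtype]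
    have : (Finset.univ.filter fun x : Fin m => x = i ∨ x = j) = {i, j} := by
      ext x
      simp [Finset.mem_filter, Finset.mem_insert]
    rw [this, Finset.card_insert_of_notMem (by simpa using hij), Finset.card_singleton]
  rw [h2, Fintype.card_fin]

private lemma sum_fix {m : ℕ} (hm : 3 ≤ m) :
    ∑ σ : Equiv.Perm (Fin m), (Finset.univ.filter fun i => σ i = i).card
      = m.factorial := by
  have key : ∀ σ : Equiv.Perm (Fin m), (Finset.univ.filter fun i => σ i = i).card
      = ∑ i : Fin m, if σ i = i then 1 else 0 := fun σ => Finset.card_filter _ _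
  calc ∑ σ : Equiv.Perm (Fin m), (Finset.univ.filter fun i => σ i = i).card
      = ∑ σ : Equiv.Perm (Fin m), ∑ i : Fin m, if σ i = i then 1 else 0 :=
        Finset.sum_congr rfl fun σ _ => key σ
    _ = ∑ i : Fin m, ∑ σ : Equiv.Perm (Fin m), if σ i = i then 1 else 0 := Finset.sum_comm
    _ = ∑ _i : Fin m, (m - 1).factorial := by
        refine Finset.sum_congr rfl fun i _ => ?_
        rw [← Finset.card_filter, ← Fintype.card_subtype, card_fix_one i]
    _ = m * (m - 1).factorial := by
        rw [Finset.sum_const, Finset.card_univ, Fintype.card_fin, smul_eq_mul]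
    _ = m.factorial := by
        have h : m - 1 + 1 = m := by omega
        calc m * (m-1).factorial = ((m-1)+1) * (m-1).factorial := by rw [h]
          _ = ((m-1)+1).factorial := (Nat.factorial_succ _).symm
          _ = m.factorial := by rw [h]

private lemma sum_fix_sq {m : ℕ} (hm : 3 ≤ m) :
    ∑ σ : Equiv.Perm (Fin m),
        (Finset.univ.filter fun i => σ i = i).card * (Finset.univ.filter fun i => σ i = i).card
      = 2 * m.factorial := by
  have key : ∀ σ : Equiv.Perm (Fin m), (Finset.univ.filter fun i => σ i = i).card
      = ∑ i : Fin m, if σ i = i then 1 else 0 := fun σ => Finset.card_filter _ _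
  have hfact1 : m.factorial = m * (m-1).factorial := by
    have h : m - 1 + 1 = m := by omega
    calc m.factorial = ((m-1)+1).factorial := by rw [h]
      _ = ((m-1)+1) * (m-1).factorial := Nat.factorial_succ _
      _ = m * (m-1).factorial := by rw [h]
  have hfact2 : (m-1).factorial = (m-1) * (m-2).factorial := by
    have h : m - 2 + 1 = m - 1 := by omega
    calc (m-1).factorial = ((m-2)+1).factorial := by rw [h]
      _ = ((m-2)+1) * (m-2).factorial := Nat.factorial_succ _
      _ = (m-1) * (m-2).factorial := by rw [h]
  calc ∑ σ : Equiv.Perm (Fin m),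
        (Finset.univ.filter fun i => σ i = i).card * (Finset.univ.filter fun i => σ i = i).card
      = ∑ σ : Equiv.Perm (Fin m), ∑ i : Fin m, ∑ j : Fin m,
          (if σ i = i then 1 else 0) * (if σ j = j then 1 else 0) := by
        refine Finset.sum_congr rfl fun σ _ => ?_
        rw [key σ, Fintype.sum_mul_sum]
    _ = ∑ i : Fin m, ∑ j : Fin m, ∑ σ : Equiv.Perm (Fin m),
          (if σ i = i then 1 else 0) * (if σ j = j then 1 else 0) := by
        rw [Finset.sum_comm]
        refine Finset.sum_congr rfl fun i _ => Finset.sum_comm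
    _ = ∑ i : Fin m, ∑ j : Fin m,
          (if i = j then (m-1).factorial else (m-2).factorial) := by
        refine Finset.sum_congr rfl fun i _ => Finset.sum_congr rfl fun j _ => ?_
        have h1 : ∀ σ : Equiv.Perm (Fin m),
            (if σ i = i then (1:ℕ) else 0) * (if σ j = j then 1 else 0)
              = if σ i = i ∧ σ j = j then 1 else 0 := by
          intro σ; by_cases h1 : σ i = i <;> by_cases h2 : σ j = j <;> simp [h1, h2]
        rw [Finset.sum_congr rfl fun σ _ => h1 σ, ← Finset.card_filter, ← Fintype.card_subtype]
        by_cases hij : i = j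
        · subst hij
          rw [Fintype.card_congr (Equiv.subtypeEquivRight fun σ => and_self_iff),
            card_fix_one i, if_pos rfl]
        · rw [if_neg hij, card_fix_two i j hij]
    _ = ∑ _i : Fin m, ((m-1).factorial + (m-1) * (m-2).factorial) := by
        refine Finset.sum_congr rfl fun i _ => ?_
        rw [← Finset.add_sum_erase _ _ (Finset.mem_univ i), if_pos rfl]
        congr 1
        rw [Finset.sum_congr rfl (fun j hj => if_neg (fun h => (Finset.mem_erase.mp hj).1 h.symm)),
          Finset.sum_const, Finset.card_erase_of_mem (Finset.mem_univ i), Finset.card_univ,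
          Fintype.card_fin, smul_eq_mul]
    _ = 2 * m.factorial := by
        rw [Finset.sum_const, Finset.card_univ, Fintype.card_fin, smul_eq_mul, ← hfact2, hfact1]
        ring

private lemma card_perm_fin (m : ℕ) :
    Fintype.card (Equiv.Perm (Fin m)) = m.factorial := by
  rw [Fintype.card_perm, Fintype.card_fin]

section Rho

variable {m : ℕ} (hm : 3 ≤ m)
    (ρ : Equiv.Perm (Fin m) →* Matrix (Fin (m - 1)) (Fin (m - 1)) ℝ)
    (horth : ∀ x, ρ x * (ρ x)ᵀ = 1)
    (htr : ∀ x, (ρ x).trace = ((Finset.univ.filter fun i : Fin m => x i = i).card : ℝ) - 1)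

include horth in
private lemma rho_transpose : ∀ σ, (ρ σ)ᵀ = ρ σ⁻¹ := by
  intro σ
  have h1 := horth σ
  have h3 : (ρ σ)ᵀ * ρ σ = 1 := mul_eq_one_comm.mp h1
  have h2 : ρ σ * ρ σ⁻¹ = 1 := by rw [← _root_.map_mul, mul_inv_cancel, _root_.map_one]
  calc (ρ σ)ᵀ = (ρ σ)ᵀ * (ρ σ * ρ σ⁻¹) := by rw [h2, mul_one]
    _ = ((ρ σ)ᵀ * ρ σ) * ρ σ⁻¹ := by rw [mul_assoc]
    _ = ρ σ⁻¹ := by rw [h3, one_mul]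

include horth in
private lemma rho_tmul : ∀ σ, (ρ σ)ᵀ * ρ σ = 1 := fun σ => mul_eq_one_comm.mp (horth σ)

include hm htr in
private lemma sum_trace : ∑ σ : Equiv.Perm (Fin m), (ρ σ).trace = 0 := by
  have : ∑ σ : Equiv.Perm (Fin m), (ρ σ).trace
      = ∑ σ : Equiv.Perm (Fin m),
          (((Finset.univ.filter fun i : Fin m => σ i = i).card : ℝ) - 1) :=
    Finset.sum_congr rfl fun σ _ => htr σ
  rw [this, Finset.sum_sub_distrib, Finset.sum_const, Finset.card_univ, card_perm_fin]
  rw [← Nat.cast_sum, sum_fix hm]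
  simp

include hm htr in
private lemma sum_trace_sq :
    ∑ σ : Equiv.Perm (Fin m), (ρ σ).trace * (ρ σ).trace = (m.factorial : ℝ) := by
  have e0 := congrArg (fun x : ℕ => (x : ℝ)) (sum_fix_sq (m := m) hm)
  have e2 := congrArg (fun x : ℕ => (x : ℝ)) (sum_fix (m := m) hm)
  push_cast at e0 e2
  have this1 : ∑ σ : Equiv.Perm (Fin m), (ρ σ).trace * (ρ σ).trace
      = ∑ σ : Equiv.Perm (Fin m),
          ((((Finset.univ.filter fun i : Fin m => σ i = i).card : ℝ)
            * ((Finset.univ.filter fun i : Fin m => σ i = i).card : ℝ))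
            - 2 * ((Finset.univ.filter fun i : Fin m => σ i = i).card : ℝ) + 1) := by
    refine Finset.sum_congr rfl fun σ _ => ?_
    rw [htr σ]; ring
  rw [this1, Finset.sum_add_distrib, Finset.sum_sub_distrib, Finset.sum_const,
    Finset.card_univ, card_perm_fin, ← Finset.mul_sum, e0, e2]
  simp

include hm horth htr in
private lemma sum_rho_eq_zero : ∑ σ : Equiv.Perm (Fin m), ρ σ = 0 := by
  set P := ∑ σ : Equiv.Perm (Fin m), ρ σ with hPdef
  have hPt : Pᵀ = P := by
    rw [hPdef, Matrix.transpose_sum]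
    calc ∑ σ : Equiv.Perm (Fin m), (ρ σ)ᵀ
        = ∑ σ : Equiv.Perm (Fin m), ρ σ⁻¹ :=
          Finset.sum_congr rfl fun σ _ => rho_transpose ρ horth σ
      _ = ∑ σ : Equiv.Perm (Fin m), ρ σ :=
          Fintype.sum_equiv (Equiv.inv (Equiv.Perm (Fin m))) _ _ (fun σ => rfl)
  have hPmul : ∀ τ, P * ρ τ = P := by
    intro τ
    rw [hPdef, Finset.sum_mul]
    exact Fintype.sum_equiv (Equiv.mulRight τ) _ _ (fun σ => (map_mul ρ σ τ).symm)
  have hPP : P * P = (m.factorial : ℝ) • P := by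
    calc P * P = ∑ τ : Equiv.Perm (Fin m), P * ρ τ := by rw [← Finset.mul_sum, ← hPdef]
      _ = ∑ _τ : Equiv.Perm (Fin m), P := Finset.sum_congr rfl fun τ _ => hPmul τ
      _ = (Fintype.card (Equiv.Perm (Fin m))) • P := by
          rw [Finset.sum_const, Finset.card_univ]
      _ = (m.factorial : ℝ) • P := by
          rw [← Nat.cast_smul_eq_nsmul ℝ, card_perm_fin]
  have htrP : P.trace = 0 := by
    rw [hPdef, Matrix.trace_sum]
    exact sum_trace hm ρ htr
  have htrPP : (P * Pᵀ).trace = 0 := by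
    rw [hPt, hPP, Matrix.trace_smul, htrP, smul_zero]
  have hsq : ∑ a : Fin (m-1), ∑ b : Fin (m-1), P a b ^ 2 = 0 := by
    have e : (P * Pᵀ).trace = ∑ a : Fin (m-1), ∑ b : Fin (m-1), P a b ^ 2 := by
      simp [Matrix.trace, Matrix.diag, Matrix.mul_apply, Matrix.transpose_apply, sq]
    rw [← e, htrPP]
  ext a b
  have h1 := (Finset.sum_eq_zero_iff_of_nonneg
    (fun a _ => Finset.sum_nonneg fun b _ => sq_nonneg (P a b))).mp hsq a (Finset.mem_univ a)
  have h2 := (Finset.sum_eq_zero_iff_of_nonneg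
    (fun b _ => sq_nonneg (P a b))).mp h1 b (Finset.mem_univ b)
  have := sq_eq_zero_iff.mp h2
  simpa using this

end Rho

private lemma mulE {k : ℕ} (X Y : Matrix (Fin k) (Fin k) ℝ) (p u t w : Fin k) :
    (X * (Matrix.single p u (1:ℝ) * Y)) t w = X t p * Y u w := by
  rw [Matrix.mul_apply, Finset.sum_eq_single p]
  · rw [Matrix.single_mul_apply_same, one_mul]
  · intro d _ hd
    simp [hd]
  · intro h; exact absurd (Finset.mem_univ p) h

private lemma stdBasis_repr {k l : ℕ} (X : Matrix (Fin k) (Fin l) ℝ) (p : Fin k × Fin l) :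
    (Matrix.stdBasis ℝ (Fin k) (Fin l)).repr X p = X p.1 p.2 := by
  have hX : X = ∑ r : Fin k × Fin l, X r.1 r.2 • Matrix.stdBasis ℝ (Fin k) (Fin l) r := by
    calc X = ∑ a : Fin k, ∑ b : Fin l, Matrix.single a b (X a b) :=
        matrix_eq_sum_single X
      _ = ∑ r : Fin k × Fin l, X r.1 r.2 • Matrix.stdBasis ℝ (Fin k) (Fin l) r := by
        rw [← Finset.sum_product']
        refine Finset.sum_congr rfl fun r _ => ?_
        rw [Matrix.stdBasis_eq_single, smul_single, smul_eq_mul, mul_one]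
  conv_lhs => rw [hX]
  rw [Module.Basis.repr_sum_self]

private lemma trace_conj {k : ℕ} (Amat Bmat : Matrix (Fin k) (Fin k) ℝ) :
    LinearMap.trace ℝ _ ((LinearMap.mulLeft ℝ Amat) ∘ₗ (LinearMap.mulRight ℝ Bmat))
      = Amat.trace * Bmat.trace := by
  rw [LinearMap.trace_eq_matrix_trace ℝ (Matrix.stdBasis ℝ (Fin k) (Fin k))]
  have hent : ∀ r : Fin k × Fin k,
      (LinearMap.toMatrix (Matrix.stdBasis ℝ (Fin k) (Fin k)) (Matrix.stdBasis ℝ (Fin k) (Fin k))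
        ((LinearMap.mulLeft ℝ Amat) ∘ₗ (LinearMap.mulRight ℝ Bmat))) r r
      = Amat r.1 r.1 * Bmat r.2 r.2 := by
    intro r
    rw [LinearMap.toMatrix_apply, Matrix.stdBasis_eq_single,
      LinearMap.comp_apply, LinearMap.mulRight_apply, LinearMap.mulLeft_apply,
      stdBasis_repr, mulE]
  rw [Matrix.trace]
  calc ∑ r : Fin k × Fin k, (LinearMap.toMatrix _ _ _).diag r
      = ∑ r : Fin k × Fin k, Amat r.1 r.1 * Bmat r.2 r.2 :=
        Finset.sum_congr rfl fun r _ => hent r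
    _ = (∑ a : Fin k, Amat a a) * (∑ b : Fin k, Bmat b b) := by
        rw [Finset.sum_mul_sum, ← Finset.sum_product']
        rfl
    _ = Amat.trace * Bmat.trace := rfl

section Rho

variable {m : ℕ} (hm : 3 ≤ m)
    (ρ : Equiv.Perm (Fin m) →* Matrix (Fin (m - 1)) (Fin (m - 1)) ℝ)
    (horth : ∀ x, ρ x * (ρ x)ᵀ = 1)
    (htr : ∀ x, (ρ x).trace = ((Finset.univ.filter fun i : Fin m => x i = i).card : ℝ) - 1)

include horth in
private lemma commC (τ : Equiv.Perm (Fin m)) (X : Matrix (Fin (m-1)) (Fin (m-1)) ℝ) :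
    ρ τ * (∑ σ : Equiv.Perm (Fin m), ρ σ * X * (ρ σ)ᵀ)
      = (∑ σ : Equiv.Perm (Fin m), ρ σ * X * (ρ σ)ᵀ) * ρ τ := by
  have hTt1 := rho_tmul ρ horth
  rw [Finset.mul_sum, Finset.sum_mul]
  refine Fintype.sum_equiv (Equiv.mulLeft τ) _ _ fun σ => ?_
  simp only [Equiv.coe_mulLeft, _root_.map_mul, Matrix.transpose_mul, mul_assoc]
  rw [hTt1 τ, mul_one]

include hm horth htr in
private lemma commutant (Y : Matrix (Fin (m-1)) (Fin (m-1)) ℝ)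
    (hY : ∀ τ, ρ τ * Y = Y * ρ τ) :
    ∃ c : ℝ, Y = c • (1 : Matrix (Fin (m-1)) (Fin (m-1)) ℝ) := by
  set c : ℝ := (m.factorial : ℝ) with hc
  have hc0 : c ≠ 0 := Nat.cast_ne_zero.mpr (Nat.factorial_ne_zero m)
  set T : Module.End ℝ (Matrix (Fin (m-1)) (Fin (m-1)) ℝ) :=
    c⁻¹ • ∑ σ : Equiv.Perm (Fin m),
      (LinearMap.mulLeft ℝ (ρ σ)) ∘ₗ (LinearMap.mulRight ℝ ((ρ σ)ᵀ)) with hTdef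
  have hTapp : ∀ X, T X = c⁻¹ • ∑ σ : Equiv.Perm (Fin m), ρ σ * X * (ρ σ)ᵀ := by
    intro X
    rw [hTdef]
    simp only [LinearMap.smul_apply, LinearMap.coe_sum, Finset.sum_apply,
      LinearMap.comp_apply, LinearMap.mulRight_apply, LinearMap.mulLeft_apply, mul_assoc]
  have hfix : ∀ X, (∀ τ, ρ τ * X = X * ρ τ) → T X = X := by
    intro X hX
    rw [hTapp]
    have he : ∀ σ : Equiv.Perm (Fin m), ρ σ * X * (ρ σ)ᵀ = X := by
      intro σ
      rw [hX σ, mul_assoc, horth σ, mul_one]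
    rw [Finset.sum_congr rfl fun σ _ => he σ, Finset.sum_const, Finset.card_univ,
      ← Nat.cast_smul_eq_nsmul ℝ, card_perm_fin, smul_smul, ← hc, inv_mul_cancel₀ hc0, one_smul]
  have hcomm : ∀ X τ, ρ τ * T X = T X * ρ τ := by
    intro X τ
    rw [hTapp, Matrix.mul_smul, Matrix.smul_mul, commC ρ horth τ X]
  have hidem : T ∘ₗ T = T := LinearMap.ext fun X => by
    rw [LinearMap.comp_apply]; exact hfix (T X) (hcomm X)
  obtain ⟨p, hp⟩ := (LinearMap.isProj_iff_isIdempotentElem T).mpr hidem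
  have htrT : LinearMap.trace ℝ _ T = 1 := by
    rw [hTdef, _root_.map_smul, map_sum]
    have : ∀ σ : Equiv.Perm (Fin m),
        LinearMap.trace ℝ _ ((LinearMap.mulLeft ℝ (ρ σ)) ∘ₗ (LinearMap.mulRight ℝ ((ρ σ)ᵀ)))
          = (ρ σ).trace * (ρ σ).trace := by
      intro σ
      rw [trace_conj, Matrix.trace_transpose]
    rw [Finset.sum_congr rfl fun σ _ => this σ, sum_trace_sq hm ρ htr, smul_eq_mul, ← hc,
      inv_mul_cancel₀ hc0]
  have hfr : Module.finrank ℝ p = 1 := by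
    have h := hp.trace
    rw [htrT] at h
    exact_mod_cast h.symm
  have h1mem : (1 : Matrix (Fin (m-1)) (Fin (m-1)) ℝ) ∈ p := by
    have h := hp.map_mem 1
    rwa [hfix 1 (fun τ => by rw [mul_one, one_mul])] at h
  have hYmem : Y ∈ p := by
    have h := hp.map_mem Y
    rwa [hfix Y hY] at h
  have hone : (1 : Matrix (Fin (m-1)) (Fin (m-1)) ℝ) ≠ 0 := by
    have hpos : 0 < m - 1 := by omega
    intro h
    have h2 := congrFun (congrFun h ⟨0, hpos⟩) ⟨0, hpos⟩
    simp [Matrix.one_apply] at h2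
  have hspan : Submodule.span ℝ {(1 : Matrix (Fin (m-1)) (Fin (m-1)) ℝ)} = p := by
    apply Submodule.eq_of_le_of_finrank_eq
    · rw [Submodule.span_le, Set.singleton_subset_iff]; exact h1mem
    · rw [finrank_span_singleton hone, hfr]
  rw [← hspan] at hYmem
  obtain ⟨cY, hcY⟩ := Submodule.mem_span_singleton.mp hYmem
  exact ⟨cY, hcY.symm⟩

end Rho

private lemma schur {m : ℕ} (hm : 3 ≤ m)
    (ρ : Equiv.Perm (Fin m) →* Matrix (Fin (m - 1)) (Fin (m - 1)) ℝ)
    (horth : ∀ x, ρ x * (ρ x)ᵀ = 1)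
    (htr : ∀ x, (ρ x).trace = ((Finset.univ.filter fun i : Fin m => x i = i).card : ℝ) - 1)
    (p q u v : Fin (m-1)) :
    ∑ σ : Equiv.Perm (Fin m), ρ σ p q * ρ σ u v
      = if p = u ∧ q = v then (m.factorial : ℝ) / ((m - 1 : ℕ) : ℝ) else 0 := by
  have hm1 : ((m - 1 : ℕ) : ℝ) ≠ 0 := Nat.cast_ne_zero.mpr (by omega)
  set E := Matrix.single q v (1:ℝ) with hE
  set X := ∑ σ : Equiv.Perm (Fin m), ρ σ * E * (ρ σ)ᵀ with hX
  have hXapp : ∀ a b, X a b = ∑ σ : Equiv.Perm (Fin m), ρ σ a q * ρ σ b v := by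
    intro a b
    rw [hX, Matrix.sum_apply]
    refine Finset.sum_congr rfl fun σ _ => ?_
    rw [mul_assoc, mulE]
    rw [Matrix.transpose_apply]
  obtain ⟨cst, hcst⟩ := commutant hm ρ horth htr X (fun τ => commC ρ horth τ E)
  have htrE : E.trace = if q = v then (1:ℝ) else 0 := by
    rcases eq_or_ne q v with rfl | hqv
    · rw [hE, Matrix.trace_single_eq_same, if_pos rfl]
    · rw [hE, Matrix.trace_single_eq_of_ne _ _ _ hqv, if_neg hqv]
  have htrX : X.trace = if q = v then (m.factorial : ℝ) else 0 := by
    rw [hX, Matrix.trace_sum]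
    have he : ∀ σ : Equiv.Perm (Fin m), (ρ σ * E * (ρ σ)ᵀ).trace = E.trace := by
      intro σ
      rw [Matrix.trace_mul_cycle, rho_tmul ρ horth σ, one_mul]
    rw [Finset.sum_congr rfl fun σ _ => he σ, Finset.sum_const, Finset.card_univ,
      card_perm_fin, htrE]
    rcases eq_or_ne q v with rfl | hqv
    · simp
    · simp [hqv]
  have htr1 : X.trace = cst * ((m - 1 : ℕ) : ℝ) := by
    rw [hcst, Matrix.trace_smul, Matrix.trace_one, smul_eq_mul]
    congr 1
    simp
  have hcstval : cst = (if q = v then (m.factorial : ℝ) else 0) / ((m - 1 : ℕ) : ℝ) := by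
    rw [eq_div_iff hm1, ← htr1, htrX]
  calc ∑ σ : Equiv.Perm (Fin m), ρ σ p q * ρ σ u v = X p u := (hXapp p u).symm
    _ = cst * ((1 : Matrix (Fin (m-1)) (Fin (m-1)) ℝ) p u) := by
        rw [hcst, Matrix.smul_apply, smul_eq_mul]
    _ = if p = u ∧ q = v then (m.factorial : ℝ) / ((m - 1 : ℕ) : ℝ) else 0 := by
        rw [hcstval, Matrix.one_apply]
        by_cases hpu : p = u <;> by_cases hqv : q = v <;> simp [hpu, hqv]

private lemma ring_id {k : ℕ} (C a a0 b b0 : Matrix (Fin k) (Fin k) ℝ) :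
    (a - a0) * (b - b0)ᵀ + (b - b0) * (a - a0)ᵀ
      = (C+a+b)*(C+a+b)ᵀ - (C+a+b0)*(C+a+b0)ᵀ - (C+a0+b)*(C+a0+b)ᵀ + (C+a0+b0)*(C+a0+b0)ᵀ := by
  simp only [Matrix.transpose_add, Matrix.transpose_sub]
  noncomm_ring

private lemma sum_weighted {k : ℕ} {G' : Type*} [Fintype G'] (w w' : G' → ℝ)
    (U V : G' → Matrix (Fin k) (Fin k) ℝ)
    (h : ∀ σ τ, U σ * (V τ)ᵀ + V τ * (U σ)ᵀ = 0) :
    (∑ σ, w σ • U σ) * (∑ τ, w' τ • V τ)ᵀ + (∑ τ, w' τ • V τ) * (∑ σ, w σ • U σ)ᵀ = 0 := by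
  have expand : ∀ (P Q : G' → Matrix (Fin k) (Fin k) ℝ),
      (∑ σ, P σ) * (∑ τ, Q τ)ᵀ = ∑ σ, ∑ τ, P σ * (Q τ)ᵀ := by
    intro P Q
    rw [Matrix.transpose_sum, Finset.sum_mul]
    exact Finset.sum_congr rfl fun σ _ => Finset.mul_sum _ _ _
  rw [expand, expand, Finset.sum_comm (f := fun τ σ => w' τ • V τ * (w σ • U σ)ᵀ),
    ← Finset.sum_add_distrib]
  have inner : ∀ σ, ∑ τ, (w σ • U σ * (w' τ • V τ)ᵀ) + ∑ τ, (w' τ • V τ * (w σ • U σ)ᵀ) = 0 := by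
    intro σ
    rw [← Finset.sum_add_distrib]
    have term : ∀ τ, w σ • U σ * (w' τ • V τ)ᵀ + w' τ • V τ * (w σ • U σ)ᵀ
        = (w σ * w' τ) • (U σ * (V τ)ᵀ + V τ * (U σ)ᵀ) := by
      intro τ
      rw [Matrix.transpose_smul, Matrix.transpose_smul, smul_add]
      rw [Matrix.smul_mul, Matrix.smul_mul, Matrix.mul_smul, Matrix.mul_smul]
      rw [smul_smul, smul_smul, mul_comm (w' τ) (w σ)]
    rw [Finset.sum_congr rfl fun τ _ => term τ]
    simp [h]
  rw [Finset.sum_congr rfl fun σ _ => inner σ]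
  simp

/-- Let `ρ` be the standard (m−1)-dimensional real orthogonal irreducible representation of
`S_m` (`m ≥ 3`), and let `g : S_m^n → ℝ^{(m−1)×(m−1)}` have the form
`g(x) = B + Σᵢ Aⁱ·ρ(xᵢ)` with `E g = 0`. If `g(x)g(x)ᵀ = M` for all `x` with `M ≠ 0` fixed,
then at most one of the matrices `A¹,…,Aⁿ` is nonzero. -/
theorem stmt_18 (m n : ℕ) (hm : 3 ≤ m)
    (ρ : Equiv.Perm (Fin m) →* Matrix (Fin (m - 1)) (Fin (m - 1)) ℝ)
    (horth : ∀ x, ρ x * (ρ x)ᵀ = 1)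
    (htr : ∀ x, (ρ x).trace = ((Finset.univ.filter fun i : Fin m => x i = i).card : ℝ) - 1)
    (B M : Matrix (Fin (m - 1)) (Fin (m - 1)) ℝ)
    (A : Fin n → Matrix (Fin (m - 1)) (Fin (m - 1)) ℝ)
    (g : (Fin n → Equiv.Perm (Fin m)) → Matrix (Fin (m - 1)) (Fin (m - 1)) ℝ)
    (hg : ∀ x, g x = B + ∑ i, A i * ρ (x i))
    (hmean : ∑ x : Fin n → Equiv.Perm (Fin m), g x = 0)
    (hM : M ≠ 0)
    (hcons : ∀ x, g x * (g x)ᵀ = M) :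
    ∀ i j : Fin n, i ≠ j → A i = 0 ∨ A j = 0 := by
  intro i j hij
  by_cases hAi : A i = 0
  · exact Or.inl hAi
  right
  have hpos : 0 < m - 1 := by omega
  let q0 : Fin (m-1) := ⟨0, hpos⟩
  set κ : ℝ := (m.factorial : ℝ) / ((m - 1 : ℕ) : ℝ) with hκdef
  have hκ : κ ≠ 0 := div_ne_zero (Nat.cast_ne_zero.mpr (Nat.factorial_ne_zero m))
    (Nat.cast_ne_zero.mpr (by omega))
  have hsum0 : ∀ p q : Fin (m-1), ∑ σ : Equiv.Perm (Fin m), ρ σ p q = 0 := by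
    intro p q
    have h := sum_rho_eq_zero hm ρ horth htr
    calc ∑ σ : Equiv.Perm (Fin m), ρ σ p q
        = (∑ σ : Equiv.Perm (Fin m), ρ σ) p q := (Matrix.sum_apply _ _ _ _).symm
      _ = 0 := by rw [h]; rfl
  have hPsi : ∀ p q : Fin (m-1), ∑ σ : Equiv.Perm (Fin m), ρ σ p q • ρ σ
      = κ • Matrix.single p q (1:ℝ) := by
    intro p q
    ext c d
    rw [Matrix.sum_apply]
    have e : ∀ σ : Equiv.Perm (Fin m), (ρ σ p q • ρ σ) c d = ρ σ p q * ρ σ c d := fun σ => rfl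
    rw [Finset.sum_congr rfl fun σ _ => e σ, schur hm ρ horth htr p q c d]
    simp only [Matrix.smul_apply, Matrix.single, Matrix.of_apply, smul_eq_mul]
    split_ifs <;> simp [hκdef]
  -- the two-coordinate family
  have hxi : ∀ σ τ : Equiv.Perm (Fin m),
      Function.update (Function.update (fun _ : Fin n => (1 : Equiv.Perm (Fin m))) i σ) j τ i
        = σ := by
    intro σ τ; rw [Function.update_of_ne hij, Function.update_self]
  have hxj : ∀ σ τ : Equiv.Perm (Fin m),
      Function.update (Function.update (fun _ : Fin n => (1 : Equiv.Perm (Fin m))) i σ) j τ j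
        = τ := by
    intro σ τ; rw [Function.update_self]
  have hxk : ∀ (σ τ : Equiv.Perm (Fin m)) (k : Fin n), k ≠ i → k ≠ j →
      Function.update (Function.update (fun _ : Fin n => (1 : Equiv.Perm (Fin m))) i σ) j τ k
        = 1 := by
    intro σ τ k h1 h2; rw [Function.update_of_ne h2, Function.update_of_ne h1]
  set D := ∑ k ∈ (Finset.univ.erase i).erase j, A k with hD
  have hGm : ∀ σ τ : Equiv.Perm (Fin m),
      g (Function.update (Function.update (fun _ : Fin n => (1 : Equiv.Perm (Fin m))) i σ) j τ)
        = (B + D) + A i * ρ σ + A j * ρ τ := by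
    intro σ τ
    rw [hg]
    have h1 : ∑ k, A k * ρ
        (Function.update (Function.update (fun _ : Fin n => (1 : Equiv.Perm (Fin m))) i σ) j τ k)
        = A i * ρ σ + (A j * ρ τ + D) := by
      rw [← Finset.add_sum_erase _ _ (Finset.mem_univ i), hxi]
      congr 1
      have hj' : j ∈ Finset.univ.erase i := Finset.mem_erase.mpr ⟨Ne.symm hij, Finset.mem_univ j⟩
      rw [← Finset.add_sum_erase _ _ hj', hxj]
      congr 1
      refine Finset.sum_congr rfl fun k hk => ?_
      have hk1 := (Finset.mem_erase.mp hk).1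
      have hk2 := (Finset.mem_erase.mp (Finset.mem_erase.mp hk).2).1
      rw [hxk σ τ k hk2 hk1, _root_.map_one, mul_one]
    rw [h1]; abel
  have hQ : ∀ σ τ : Equiv.Perm (Fin m),
      ((B+D) + A i * ρ σ + A j * ρ τ) * ((B+D) + A i * ρ σ + A j * ρ τ)ᵀ = M :=
    fun σ τ => by rw [← hGm σ τ]; exact hcons _
  have hdiff : ∀ σ τ : Equiv.Perm (Fin m),
      (A i * ρ σ - A i * ρ 1) * (A j * ρ τ - A j * ρ 1)ᵀ
        + (A j * ρ τ - A j * ρ 1) * (A i * ρ σ - A i * ρ 1)ᵀ = 0 := by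
    intro σ τ
    rw [ring_id (B+D) (A i * ρ σ) (A i * ρ 1) (A j * ρ τ) (A j * ρ 1),
      hQ σ τ, hQ σ 1, hQ 1 τ, hQ 1 1]
    simp
  have hU : ∀ (p q : Fin (m-1)) (Amat : Matrix (Fin (m-1)) (Fin (m-1)) ℝ),
      ∑ σ : Equiv.Perm (Fin m), ρ σ p q • (Amat * ρ σ - Amat * ρ 1)
        = κ • (Amat * Matrix.single p q (1:ℝ)) := by
    intro p q Amat
    have e1 : ∀ σ : Equiv.Perm (Fin m), ρ σ p q • (Amat * ρ σ - Amat * ρ 1)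
        = Amat * (ρ σ p q • ρ σ) - ρ σ p q • (Amat * ρ 1) := by
      intro σ; rw [smul_sub, Matrix.mul_smul]
    rw [Finset.sum_congr rfl fun σ _ => e1 σ, Finset.sum_sub_distrib, ← Finset.mul_sum, hPsi]
    have e2 : ∑ σ : Equiv.Perm (Fin m), ρ σ p q • (Amat * ρ 1) = 0 := by
      rw [← Finset.sum_smul, hsum0, zero_smul]
    rw [e2, sub_zero, Matrix.mul_smul]
  have hkey : ∀ p u : Fin (m-1),
      A i * (Matrix.single p u (1:ℝ) * (A j)ᵀ)
        + A j * (Matrix.single u p (1:ℝ) * (A i)ᵀ) = 0 := by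
    intro p u
    have h0 : (κ • (A i * Matrix.single p q0 (1:ℝ)))
          * (κ • (A j * Matrix.single u q0 (1:ℝ)))ᵀ
        + (κ • (A j * Matrix.single u q0 (1:ℝ)))
          * (κ • (A i * Matrix.single p q0 (1:ℝ)))ᵀ = 0 := by
      rw [← hU p q0 (A i), ← hU u q0 (A j)]
      exact sum_weighted (fun σ => ρ σ p q0) (fun τ => ρ τ u q0)
        (fun σ => A i * ρ σ - A i * ρ 1) (fun τ => A j * ρ τ - A j * ρ 1) hdiff
    have hEt : ∀ a b : Fin (m-1), (Matrix.single a b (1:ℝ))ᵀ = Matrix.single b a 1 := by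
      intro a b; ext c d
      simp only [Matrix.transpose_apply, Matrix.single, Matrix.of_apply]
      by_cases h1 : a = d <;> by_cases h2 : b = c <;> simp [h1, h2]
    rw [Matrix.transpose_smul, Matrix.transpose_smul, Matrix.transpose_mul, Matrix.transpose_mul,
      hEt, hEt, Matrix.smul_mul, Matrix.smul_mul, Matrix.mul_smul, Matrix.mul_smul,
      smul_smul, smul_smul, ← smul_add] at h0
    have h1 := (smul_eq_zero.mp h0).resolve_left (mul_ne_zero hκ hκ)
    have e3 : A i * Matrix.single p q0 (1:ℝ) * (Matrix.single q0 u (1:ℝ) * (A j)ᵀ)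
        = A i * (Matrix.single p u (1:ℝ) * (A j)ᵀ) := by
      rw [mul_assoc, ← mul_assoc (Matrix.single p q0 (1:ℝ)),
        Matrix.single_mul_single_same, one_mul]
    have e4 : A j * Matrix.single u q0 (1:ℝ) * (Matrix.single q0 p (1:ℝ) * (A i)ᵀ)
        = A j * (Matrix.single u p (1:ℝ) * (A i)ᵀ) := by
      rw [mul_assoc, ← mul_assoc (Matrix.single u q0 (1:ℝ)),
        Matrix.single_mul_single_same, one_mul]
    rw [e3, e4] at h1
    exact h1
  have hR : ∀ t p w u_, A i t p * A j w u_ + A j t u_ * A i w p = 0 := by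
    intro t p w u_
    have h2 : (A i * (Matrix.single p u_ (1:ℝ) * (A j)ᵀ)
        + A j * (Matrix.single u_ p (1:ℝ) * (A i)ᵀ)) t w = (0 : Matrix _ _ ℝ) t w := by
      rw [hkey p u_]
    rw [Matrix.add_apply, mulE, mulE, Matrix.zero_apply, Matrix.transpose_apply,
      Matrix.transpose_apply] at h2
    exact h2
  obtain ⟨t, p, htp⟩ : ∃ t p, A i t p ≠ 0 := by
    by_contra hcon
    push_neg at hcon
    apply hAi
    ext a b
    simpa using hcon a b
  have hrow : ∀ u_, A j t u_ = 0 := by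
    intro u_
    have h3 := hR t p t u_
    have h4 : A i t p * A j t u_ = 0 := by linear_combination h3 / 2
    exact (mul_eq_zero.mp h4).resolve_left htp
  ext w u_
  have h5 := hR t p w u_
  rw [hrow u_, zero_mul, add_zero] at h5
  have h6 := (mul_eq_zero.mp h5).resolve_left htp
  simpa using h6
end

section
/- Let g : S_m^n → ℝ^{(m−1)×(m−1)} satisfy: there is a matrix M with range(g) ⊆ M·{ρ¹(y) : y ∈ S_m}, and suppose there exist i and a matrix A with E_x‖g(x) − Aρ¹(xᵢ)‖₂² ≤ δ². Then there exists A′ with A′ ∈ M·{ρ¹(y) : y} (i.e. h′(x) = A′ρ¹(xᵢ) takes consistent values) such that E_x‖g(x) − A′ρ¹(xᵢ)‖₂² ≤ 4δ². -/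
open Matrix BigOperators

private lemma msq_trace {k : ℕ} (B : Matrix (Fin k) (Fin k) ℝ) :
    ∑ s, ∑ t, (B s t) ^ 2 = (B * Bᵀ).trace := by
  simp [Matrix.trace, Matrix.mul_apply, Matrix.diag, sq]

private lemma msq_orth {k : ℕ} (B R : Matrix (Fin k) (Fin k) ℝ) (h : R * Rᵀ = 1) :
    ∑ s, ∑ t, ((B * R) s t) ^ 2 = ∑ s, ∑ t, (B s t) ^ 2 := by
  rw [msq_trace, msq_trace, Matrix.transpose_mul, Matrix.mul_assoc,
    ← Matrix.mul_assoc R Rᵀ Bᵀ, h, Matrix.one_mul]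

private lemma msq_two {k : ℕ} (U V : Matrix (Fin k) (Fin k) ℝ) :
    ∑ s, ∑ t, ((U + V) s t) ^ 2 ≤
      2 * (∑ s, ∑ t, (U s t) ^ 2) + 2 * (∑ s, ∑ t, (V s t) ^ 2) := by
  rw [Finset.mul_sum, Finset.mul_sum, ← Finset.sum_add_distrib]
  apply Finset.sum_le_sum; intro s _
  rw [Finset.mul_sum, Finset.mul_sum, ← Finset.sum_add_distrib]
  apply Finset.sum_le_sum; intro t _
  simp only [Matrix.add_apply]
  nlinarith [sq_nonneg (U s t - V s t)]
/-- Rounding to a consistent dictator: let `ρ` be the standard (m−1)-dimensional real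
orthogonal representation of `S_m`, and `g : S_m^n → ℝ^{(m−1)×(m−1)}` with
`range(g) ⊆ M·{ρ(y)}`. If for some coordinate `i` and matrix `A` we have
`E_x ‖g(x) − A·ρ(xᵢ)‖₂² ≤ δ²`, then there is `A' ∈ M·{ρ(y)}` with
`E_x ‖g(x) − A'·ρ(xᵢ)‖₂² ≤ 4δ²` (Frobenius norms). -/
theorem stmt_19 (m n : ℕ)
    (ρ : Equiv.Perm (Fin m) →* Matrix (Fin (m - 1)) (Fin (m - 1)) ℝ)
    (horth : ∀ x, ρ x * (ρ x)ᵀ = 1)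
    (htr : ∀ x, (ρ x).trace = ((Finset.univ.filter fun i : Fin m => x i = i).card : ℝ) - 1)
    (M : Matrix (Fin (m - 1)) (Fin (m - 1)) ℝ)
    (g : (Fin n → Equiv.Perm (Fin m)) → Matrix (Fin (m - 1)) (Fin (m - 1)) ℝ)
    (hrange : ∀ x, ∃ y : Equiv.Perm (Fin m), g x = M * ρ y)
    (i : Fin n) (A : Matrix (Fin (m - 1)) (Fin (m - 1)) ℝ) (δ : ℝ)
    (hclose : ((Fintype.card (Fin n → Equiv.Perm (Fin m)) : ℝ))⁻¹ *
        ∑ x : Fin n → Equiv.Perm (Fin m),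
          (∑ s, ∑ t, ((g x - A * ρ (x i)) s t) ^ 2) ≤ δ ^ 2) :
    ∃ A' : Matrix (Fin (m - 1)) (Fin (m - 1)) ℝ,
      (∃ y : Equiv.Perm (Fin m), A' = M * ρ y) ∧
      ((Fintype.card (Fin n → Equiv.Perm (Fin m)) : ℝ))⁻¹ *
          ∑ x : Fin n → Equiv.Perm (Fin m),
            (∑ s, ∑ t, ((g x - A' * ρ (x i)) s t) ^ 2) ≤ 4 * δ ^ 2 := by
  classical
  set F : (Fin n → Equiv.Perm (Fin m)) → ℝ :=
    fun x => ∑ s, ∑ t, ((g x - A * ρ (x i)) s t) ^ 2 with hF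
  have hFnn : ∀ x, 0 ≤ F x := fun x =>
    Finset.sum_nonneg fun s _ => Finset.sum_nonneg fun t _ => sq_nonneg _
  have hcard : (0 : ℝ) < (Fintype.card (Fin n → Equiv.Perm (Fin m)) : ℝ) := by
    exact_mod_cast Fintype.card_pos
  have hsum : ∑ x, F x ≤ (Fintype.card (Fin n → Equiv.Perm (Fin m)) : ℝ) * δ ^ 2 := by
    rw [inv_mul_le_iff₀ hcard] at hclose
    exact hclose
  -- find a good point x₀
  obtain ⟨x₀, hx₀⟩ : ∃ x₀, F x₀ ≤ δ ^ 2 := by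
    by_contra h
    push_neg at h
    have : (Fintype.card (Fin n → Equiv.Perm (Fin m)) : ℝ) * δ ^ 2 < ∑ x, F x := by
      calc (Fintype.card (Fin n → Equiv.Perm (Fin m)) : ℝ) * δ ^ 2
          = ∑ _x : Fin n → Equiv.Perm (Fin m), δ ^ 2 := by
            rw [Finset.sum_const, nsmul_eq_mul, Fintype.card]
        _ < ∑ x, F x := Finset.sum_lt_sum_of_nonempty Finset.univ_nonempty fun x _ => h x
    linarith
  have hinv : ∀ z, (ρ z)ᵀ = ρ z⁻¹ := by
    intro z
    calc (ρ z)ᵀ = ρ z⁻¹ * (ρ z * (ρ z)ᵀ) := by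
          rw [← Matrix.mul_assoc, ← _root_.map_mul, inv_mul_cancel, _root_.map_one, Matrix.one_mul]
      _ = ρ z⁻¹ := by rw [horth, Matrix.mul_one]
  have horth' : ∀ z, (ρ z)ᵀ * ρ z = 1 := fun z => mul_eq_one_comm.mp (horth z)
  set A' : Matrix (Fin (m - 1)) (Fin (m - 1)) ℝ := g x₀ * (ρ (x₀ i))ᵀ with hA'
  obtain ⟨y₀, hy₀⟩ := hrange x₀
  refine ⟨A', ⟨y₀ * (x₀ i)⁻¹, ?_⟩, ?_⟩
  · rw [hA', hy₀, hinv, _root_.map_mul, Matrix.mul_assoc]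
  have hkey : A' * ρ (x₀ i) = g x₀ := by
    rw [hA', Matrix.mul_assoc, horth', Matrix.mul_one]
  have hdist : ∑ s, ∑ t, ((A - A') s t) ^ 2 ≤ δ ^ 2 := by
    have h1 : (A - A') * ρ (x₀ i) = -(g x₀ - A * ρ (x₀ i)) := by
      rw [Matrix.sub_mul, hkey, neg_sub]
    have h2 : ∑ s, ∑ t, ((A - A') s t) ^ 2 = F x₀ := by
      rw [← msq_orth (A - A') (ρ (x₀ i)) (horth _), h1, hF]
      simp [Matrix.neg_apply]
      exact Finset.sum_congr rfl fun s _ => Finset.sum_congr rfl fun t _ => by ring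
    rw [h2]; exact hx₀
  have hpt : ∀ x, ∑ s, ∑ t, ((g x - A' * ρ (x i)) s t) ^ 2 ≤ 2 * F x + 2 * δ ^ 2 := by
    intro x
    have hdecomp : g x - A' * ρ (x i) = (g x - A * ρ (x i)) + (A - A') * ρ (x i) := by
      rw [Matrix.sub_mul]; abel
    calc ∑ s, ∑ t, ((g x - A' * ρ (x i)) s t) ^ 2
        ≤ 2 * F x + 2 * (∑ s, ∑ t, (((A - A') * ρ (x i)) s t) ^ 2) := by
          rw [hdecomp]; exact msq_two _ _
      _ = 2 * F x + 2 * (∑ s, ∑ t, ((A - A') s t) ^ 2) := by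
          rw [msq_orth (A - A') (ρ (x i)) (horth _)]
      _ ≤ 2 * F x + 2 * δ ^ 2 := by linarith
  rw [inv_mul_le_iff₀ hcard]
  calc ∑ x, ∑ s, ∑ t, ((g x - A' * ρ (x i)) s t) ^ 2
      ≤ ∑ x, (2 * F x + 2 * δ ^ 2) := Finset.sum_le_sum fun x _ => hpt x
    _ = 2 * (∑ x, F x) + (Fintype.card (Fin n → Equiv.Perm (Fin m)) : ℝ) * (2 * δ ^ 2) := by
        rw [Finset.sum_add_distrib, ← Finset.mul_sum, Finset.sum_const, nsmul_eq_mul,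
          Fintype.card]
    _ ≤ (Fintype.card (Fin n → Equiv.Perm (Fin m)) : ℝ) * (4 * δ ^ 2) := by nlinarith
end
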